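/- arXiv:2208.01091 — 2 statements merged into one kernel-verified Lean document; each statement's English description precedes it below -/
import Mathlib

section
/- Commutation identity E·A = A'·E: for the k×k matrices E, A over ℤ[z_1,…,z_k] defined below and A' the antidiagonal transpose of A, one has the matrix equality E·A = A'·E. -/
open Finset MvPolynomial

noncomputable section

/-- The elementary symmetric polynomial `e_r` of a family of ring elements. -/
def esymmF {R : Type*} [CommRing R] {m : ℕ} (f : Fin m → R) (r : ℕ) : R :=
  ∑ t ∈ Finset.powersetCard r Finset.univ, ∏ j ∈ t, f j

/-- `e_r(z)` in `ℤ[z_1,…,z_k]`. -/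
def eP (k : ℕ) (r : ℕ) : MvPolynomial (Fin k) ℤ :=
  esymmF (fun i => X i) r

/-- The truncation `c^z_{≥j} = Σ_{i=j}^{k} (-1)^{i-j} e_i(z)`. -/
def cGe (k : ℕ) (j : ℕ) : MvPolynomial (Fin k) ℤ :=
  ∑ i ∈ Finset.Icc j k, (-1) ^ (i - j) * eP k i

/-- The truncation `c^z_{≤m} = Σ_{i=0}^{m} (-1)^i e_i(z)`. -/
def cLe (k : ℕ) (m : ℕ) : MvPolynomial (Fin k) ℤ :=
  ∑ i ∈ Finset.range (m + 1), (-1) ^ i * eP k i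

/-- Entries (with `1`-based indices) of the matrix `A`:
`A_{ij} = (-1)^{k-i} c^z_{≥ k-j+1}` for `j < i` and `A_{ij} = (-1)^{j-i} c^z_{≤ k-j}` for `j ≥ i`. -/
def Afun (k : ℕ) (i j : ℕ) : MvPolynomial (Fin k) ℤ :=
  if j < i then (-1) ^ (k - i) * cGe k (k - j + 1) else (-1) ^ (j - i) * cLe k (k - j)

/-- Entries (with `1`-based indices) of the lower-triangular matrix `E`:
`E_{ij} = −e_{i−j}(z)` for `i ≥ j` and `E_{ij} = 0` for `i < j`. -/
def Efun (k : ℕ) (i j : ℕ) : MvPolynomial (Fin k) ℤ :=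
  if j ≤ i then -(eP k (i - j)) else 0

/-- The `k × k` matrix `E`. -/
def EMat (k : ℕ) : Matrix (Fin k) (Fin k) (MvPolynomial (Fin k) ℤ) :=
  Matrix.of fun i j => Efun k (i.val + 1) (j.val + 1)

/-- The `k × k` matrix `A`. -/
def AMat (k : ℕ) : Matrix (Fin k) (Fin k) (MvPolynomial (Fin k) ℤ) :=
  Matrix.of fun i j => Afun k (i.val + 1) (j.val + 1)

/-- The antidiagonal transpose `A'` of `A`: `A'_{ij} = A_{k+1-j, k+1-i}` (`1`-based). -/
def AMat' (k : ℕ) : Matrix (Fin k) (Fin k) (MvPolynomial (Fin k) ℤ) :=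
  Matrix.of fun i j => Afun k (k + 1 - (j.val + 1)) (k + 1 - (i.val + 1))

namespace EAcommAux

variable (k : ℕ)

lemma eP_eq_zero {r : ℕ} (h : k < r) : eP k r = 0 := by
  unfold eP esymmF
  rw [Finset.powersetCard_eq_empty.mpr (by simpa using h), Finset.sum_empty]

/-- `T k a = Σ_{i=a}^{k} (-1)^i e_i`. -/
def T (a : ℕ) : MvPolynomial (Fin k) ℤ := (-1) ^ a * cGe k a

lemma T_eq (a : ℕ) : T k a = ∑ i ∈ Finset.Icc a k, (-1) ^ i * eP k i := by
  unfold T cGe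
  rw [Finset.mul_sum]
  refine Finset.sum_congr rfl fun i hi => ?_
  rw [Finset.mem_Icc] at hi
  rw [← mul_assoc, ← pow_add, Nat.add_sub_cancel' hi.1]

lemma T_zero_of_gt {a : ℕ} (h : k < a) : T k a = 0 := by
  unfold T cGe
  rw [Finset.Icc_eq_empty (by omega), Finset.sum_empty, mul_zero]

lemma sum_alt (a b : ℕ) (h : a ≤ b + 1) :
    ∑ r ∈ Finset.Icc a b, (-1) ^ r * eP k r = T k a - T k (b + 1) := by
  rcases le_or_gt a (k + 1) with ha | ha
  swap
  · rw [T_zero_of_gt k (show k < a by omega), T_zero_of_gt k (show k < b + 1 by omega),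
      sub_zero]
    exact Finset.sum_eq_zero fun r hr => by
      rw [Finset.mem_Icc] at hr
      rw [eP_eq_zero k (by omega), mul_zero]
  rcases le_or_gt b k with hb | hb
  · rw [T_eq, T_eq, eq_sub_iff_add_eq]
    simp only [← Finset.Ico_add_one_right_eq_Icc]
    exact Finset.sum_Ico_consecutive _ h (by omega)
  · rw [T_zero_of_gt k (show k < b + 1 by omega), sub_zero, T_eq]
    simp only [← Finset.Ico_add_one_right_eq_Icc]
    rw [← Finset.sum_Ico_consecutive (fun r => (-1 : MvPolynomial (Fin k) ℤ) ^ r * eP k r)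
      (show a ≤ k + 1 by omega) (show k + 1 ≤ b + 1 by omega)]
    have hz : ∑ r ∈ Finset.Ico (k + 1) (b + 1), (-1 : MvPolynomial (Fin k) ℤ) ^ r * eP k r = 0 :=
      Finset.sum_eq_zero fun r hr => by
        rw [Finset.mem_Ico] at hr
        rw [eP_eq_zero k (by omega), mul_zero]
    rw [hz, add_zero]

lemma cLe_eq (m : ℕ) : cLe k m = T k 0 - T k (m + 1) := by
  rw [← sum_alt k 0 m (by omega)]
  unfold cLe
  rw [Finset.range_eq_Ico, Finset.Ico_add_one_right_eq_Icc]

lemma npow_sub {a b : ℕ} (h : b ≤ a) :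
    ((-1 : MvPolynomial (Fin k) ℤ)) ^ (a - b) = (-1) ^ a * (-1) ^ b := by
  have h1 : ((-1 : MvPolynomial (Fin k) ℤ)) ^ a = (-1) ^ (a - b) * (-1) ^ b := by
    rw [← pow_add, Nat.sub_add_cancel h]
  have h2 : ((-1 : MvPolynomial (Fin k) ℤ)) ^ b * (-1) ^ b = 1 := by
    rw [← pow_add]
    exact Even.neg_one_pow ⟨b, rfl⟩
  rw [h1, mul_assoc, h2, mul_one]

lemma sum_refl (a b i : ℕ) (hab : a ≤ b) (hbi : b ≤ i) :
    ∑ l ∈ Finset.Icc a b, (-1) ^ l * eP k (i - l)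
      = (-1) ^ i * (T k (i - b) - T k (i - a + 1)) := by
  have key : ∑ l ∈ Finset.Icc a b, ((-1 : MvPolynomial (Fin k) ℤ)) ^ l * eP k (i - l)
      = ∑ r ∈ Finset.Icc (i - b) (i - a), (-1) ^ (i - r) * eP k r := by
    refine Finset.sum_nbij' (fun l => i - l) (fun r => i - r) ?_ ?_ ?_ ?_ ?_
    · intro l hl; rw [Finset.mem_Icc] at hl
      show i - l ∈ Finset.Icc (i - b) (i - a); rw [Finset.mem_Icc]; omega
    · intro r hr; rw [Finset.mem_Icc] at hr
      show i - r ∈ Finset.Icc a b; rw [Finset.mem_Icc]; omega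
    · intro l hl; rw [Finset.mem_Icc] at hl; show i - (i - l) = l; omega
    · intro r hr; rw [Finset.mem_Icc] at hr; show i - (i - r) = r; omega
    · intro l hl
      rw [Finset.mem_Icc] at hl
      show ((-1 : MvPolynomial (Fin k) ℤ)) ^ l * eP k (i - l)
        = (-1) ^ (i - (i - l)) * eP k (i - l)
      rw [show i - (i - l) = l from by omega]
  rw [key]
  have key2 : ∑ r ∈ Finset.Icc (i - b) (i - a), ((-1 : MvPolynomial (Fin k) ℤ)) ^ (i - r) * eP k r
      = (-1) ^ i * ∑ r ∈ Finset.Icc (i - b) (i - a), (-1) ^ r * eP k r := by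
    rw [Finset.mul_sum]
    refine Finset.sum_congr rfl fun r hr => ?_
    rw [Finset.mem_Icc] at hr
    rw [npow_sub k (by omega : r ≤ i)]
    ring
  rw [key2, sum_alt k _ _ (by omega)]

lemma sum_shift (a b j : ℕ) (hja : j ≤ a) (hab : a ≤ b) :
    ∑ l ∈ Finset.Icc a b, (-1) ^ l * eP k (l - j)
      = (-1) ^ j * (T k (a - j) - T k (b - j + 1)) := by
  have key : ∑ l ∈ Finset.Icc a b, ((-1 : MvPolynomial (Fin k) ℤ)) ^ l * eP k (l - j)
      = ∑ r ∈ Finset.Icc (a - j) (b - j), (-1) ^ (r + j) * eP k r := by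
    refine Finset.sum_nbij' (fun l => l - j) (fun r => r + j) ?_ ?_ ?_ ?_ ?_
    · intro l hl; rw [Finset.mem_Icc] at hl
      show l - j ∈ Finset.Icc (a - j) (b - j); rw [Finset.mem_Icc]; omega
    · intro r hr; rw [Finset.mem_Icc] at hr
      show r + j ∈ Finset.Icc a b; rw [Finset.mem_Icc]; omega
    · intro l hl; rw [Finset.mem_Icc] at hl; show l - j + j = l; omega
    · intro r hr; rw [Finset.mem_Icc] at hr; show r + j - j = r; omega
    · intro l hl
      rw [Finset.mem_Icc] at hl
      show ((-1 : MvPolynomial (Fin k) ℤ)) ^ l * eP k (l - j)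
        = (-1) ^ (l - j + j) * eP k (l - j)
      rw [show l - j + j = l from by omega]
  rw [key]
  have key2 : ∑ r ∈ Finset.Icc (a - j) (b - j), ((-1 : MvPolynomial (Fin k) ℤ)) ^ (r + j) * eP k r
      = (-1) ^ j * ∑ r ∈ Finset.Icc (a - j) (b - j), (-1) ^ r * eP k r := by
    rw [Finset.mul_sum]
    refine Finset.sum_congr rfl fun r hr => ?_
    rw [pow_add]
    ring
  rw [key2, sum_alt k _ _ (by omega)]

lemma core (i j : ℕ) (hi1 : 1 ≤ i) (hik : i ≤ k) (hj1 : 1 ≤ j) (hjk : j ≤ k) :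
    ∑ l ∈ Finset.Icc 1 k, Efun k i l * Afun k l j
      = ∑ l ∈ Finset.Icc 1 k, Afun k (k + 1 - l) (k + 1 - i) * Efun k l j := by
  have hL : ∑ l ∈ Finset.Icc 1 k, Efun k i l * Afun k l j
      = ∑ l ∈ Finset.Icc 1 i, Efun k i l * Afun k l j := by
    refine (Finset.sum_subset (Finset.Icc_subset_Icc_right hik) fun x hx hx' => ?_).symm
    rw [Finset.mem_Icc] at hx
    simp only [Finset.mem_Icc, not_and, not_le] at hx'
    rw [Efun, if_neg (by omega), zero_mul]
  have hR : ∑ l ∈ Finset.Icc 1 k, Afun k (k + 1 - l) (k + 1 - i) * Efun k l j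
      = ∑ l ∈ Finset.Icc j k, Afun k (k + 1 - l) (k + 1 - i) * Efun k l j := by
    refine (Finset.sum_subset (Finset.Icc_subset_Icc_left hj1) fun x hx hx' => ?_).symm
    rw [Finset.mem_Icc] at hx
    simp only [Finset.mem_Icc, not_and, not_le] at hx'
    rw [Efun, if_neg (by omega), mul_zero]
  rw [hL, hR]
  rcases lt_or_ge j i with hji | hij
  · -- case j < i
    have e1 : ∑ l ∈ Finset.Icc 1 i, Efun k i l * Afun k l j
        = (∑ l ∈ Finset.Icc 1 j, Efun k i l * Afun k l j)
          + ∑ l ∈ Finset.Icc (j + 1) i, Efun k i l * Afun k l j := by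
      simp only [← Finset.Ico_add_one_right_eq_Icc]
      refine (Finset.sum_Ico_consecutive _ ?_ ?_).symm <;> omega
    have e2 : ∑ l ∈ Finset.Icc j k, Afun k (k + 1 - l) (k + 1 - i) * Efun k l j
        = (∑ l ∈ Finset.Icc j (i - 1), Afun k (k + 1 - l) (k + 1 - i) * Efun k l j)
          + ∑ l ∈ Finset.Icc i k, Afun k (k + 1 - l) (k + 1 - i) * Efun k l j := by
      have hii : i - 1 + 1 = i := by omega
      simp only [← Finset.Ico_add_one_right_eq_Icc, hii]
      refine (Finset.sum_Ico_consecutive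
        (fun l => Afun k (k + 1 - l) (k + 1 - i) * Efun k l j) ?_ ?_).symm <;> omega
    rw [e1, e2]
    have p1 : ∑ l ∈ Finset.Icc 1 j, Efun k i l * Afun k l j
        = -(cLe k (k - j) * (-1) ^ j) * ((-1) ^ i * (T k (i - j) - T k (i - 1 + 1))) := by
      rw [show (∑ l ∈ Finset.Icc 1 j, Efun k i l * Afun k l j)
          = ∑ l ∈ Finset.Icc 1 j, -(cLe k (k - j) * (-1) ^ j) * ((-1) ^ l * eP k (i - l)) from
        Finset.sum_congr rfl fun l hl => by
          rw [Finset.mem_Icc] at hl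
          rw [Efun, Afun, if_pos (by omega), if_neg (by omega), npow_sub k (by omega : l ≤ j)]
          ring]
      rw [← Finset.mul_sum, sum_refl k 1 j i hj1 (by omega)]
    have p2 : ∑ l ∈ Finset.Icc (j + 1) i, Efun k i l * Afun k l j
        = -(cGe k (k - j + 1) * (-1) ^ k) * ((-1) ^ i * (T k (i - i) - T k (i - (j + 1) + 1))) := by
      rw [show (∑ l ∈ Finset.Icc (j + 1) i, Efun k i l * Afun k l j)
          = ∑ l ∈ Finset.Icc (j + 1) i,
              -(cGe k (k - j + 1) * (-1) ^ k) * ((-1) ^ l * eP k (i - l)) from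
        Finset.sum_congr rfl fun l hl => by
          rw [Finset.mem_Icc] at hl
          rw [Efun, Afun, if_pos (by omega), if_pos (by omega), npow_sub k (by omega : l ≤ k)]
          ring]
      rw [← Finset.mul_sum, sum_refl k (j + 1) i i (by omega) (by omega)]
    have p3 : ∑ l ∈ Finset.Icc j (i - 1), Afun k (k + 1 - l) (k + 1 - i) * Efun k l j
        = cGe k i * ((-1) ^ j * (T k (j - j) - T k (i - 1 - j + 1))) := by
      rw [show (∑ l ∈ Finset.Icc j (i - 1), Afun k (k + 1 - l) (k + 1 - i) * Efun k l j)
          = ∑ l ∈ Finset.Icc j (i - 1), cGe k i * ((-1) ^ l * eP k (l - j)) from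
        Finset.sum_congr rfl fun l hl => by
          rw [Finset.mem_Icc] at hl
          rw [Efun, Afun, if_pos (by omega : k + 1 - i < k + 1 - l), if_pos (by omega),
            show k - (k + 1 - l) = l - 1 by omega, show k - (k + 1 - i) + 1 = i by omega,
            npow_sub k (by omega : 1 ≤ l)]
          ring]
      rw [← Finset.mul_sum, sum_shift k j (i - 1) j le_rfl (by omega)]
    have p4 : ∑ l ∈ Finset.Icc i k, Afun k (k + 1 - l) (k + 1 - i) * Efun k l j
        = -(cLe k (i - 1) * (-1) ^ i) * ((-1) ^ j * (T k (i - j) - T k (k - j + 1))) := by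
      rw [show (∑ l ∈ Finset.Icc i k, Afun k (k + 1 - l) (k + 1 - i) * Efun k l j)
          = ∑ l ∈ Finset.Icc i k, -(cLe k (i - 1) * (-1) ^ i) * ((-1) ^ l * eP k (l - j)) from
        Finset.sum_congr rfl fun l hl => by
          rw [Finset.mem_Icc] at hl
          rw [Efun, Afun, if_neg (by omega : ¬ k + 1 - i < k + 1 - l), if_pos (by omega),
            show (k + 1 - i) - (k + 1 - l) = l - i by omega,
            show k - (k + 1 - i) = i - 1 by omega,
            npow_sub k (by omega : i ≤ l)]
          ring]
      rw [← Finset.mul_sum, sum_shift k i k j (by omega) hik]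
    rw [p1, p2, p3, p4]
    rw [show i - 1 + 1 = i by omega, show i - i = 0 by omega,
      show i - (j + 1) + 1 = i - j by omega, show j - j = 0 by omega,
      show i - 1 - j + 1 = i - j by omega]
    rw [cLe_eq k (k - j), cLe_eq k (i - 1), show i - 1 + 1 = i by omega]
    unfold T
    have s1 : ((-1 : MvPolynomial (Fin k) ℤ)) ^ (i - j) = (-1) ^ i * (-1) ^ j :=
      npow_sub k (by omega)
    have s2 : ((-1 : MvPolynomial (Fin k) ℤ)) ^ (k - j + 1) = ((-1) ^ k * (-1) ^ j) * (-1) := by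
      rw [pow_succ, npow_sub k (by omega)]
    rw [s1, s2, pow_zero]
    rcases Nat.even_or_odd i with hpi | hpi <;>
      rcases Nat.even_or_odd j with hpj | hpj <;>
        rcases Nat.even_or_odd k with hpk | hpk <;>
          simp only [hpi.neg_one_pow, hpj.neg_one_pow, hpk.neg_one_pow] <;> ring
  · -- case i ≤ j
    have p1 : ∑ l ∈ Finset.Icc 1 i, Efun k i l * Afun k l j
        = -(cLe k (k - j) * (-1) ^ j) * ((-1) ^ i * (T k (i - i) - T k (i - 1 + 1))) := by
      rw [show (∑ l ∈ Finset.Icc 1 i, Efun k i l * Afun k l j)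
          = ∑ l ∈ Finset.Icc 1 i, -(cLe k (k - j) * (-1) ^ j) * ((-1) ^ l * eP k (i - l)) from
        Finset.sum_congr rfl fun l hl => by
          rw [Finset.mem_Icc] at hl
          rw [Efun, Afun, if_pos (by omega), if_neg (by omega), npow_sub k (by omega : l ≤ j)]
          ring]
      rw [← Finset.mul_sum, sum_refl k 1 i i hi1 le_rfl]
    have p2 : ∑ l ∈ Finset.Icc j k, Afun k (k + 1 - l) (k + 1 - i) * Efun k l j
        = -(cLe k (i - 1) * (-1) ^ i) * ((-1) ^ j * (T k (j - j) - T k (k - j + 1))) := by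
      rw [show (∑ l ∈ Finset.Icc j k, Afun k (k + 1 - l) (k + 1 - i) * Efun k l j)
          = ∑ l ∈ Finset.Icc j k, -(cLe k (i - 1) * (-1) ^ i) * ((-1) ^ l * eP k (l - j)) from
        Finset.sum_congr rfl fun l hl => by
          rw [Finset.mem_Icc] at hl
          rw [Efun, Afun, if_neg (by omega : ¬ k + 1 - i < k + 1 - l), if_pos (by omega),
            show (k + 1 - i) - (k + 1 - l) = l - i by omega,
            show k - (k + 1 - i) = i - 1 by omega,
            npow_sub k (by omega : i ≤ l)]
          ring]
      rw [← Finset.mul_sum, sum_shift k j k j le_rfl hjk]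
    rw [p1, p2]
    rw [show i - 1 + 1 = i by omega, show i - i = 0 by omega, show j - j = 0 by omega]
    rw [cLe_eq k (k - j), cLe_eq k (i - 1), show i - 1 + 1 = i by omega]
    unfold T
    have s2 : ((-1 : MvPolynomial (Fin k) ℤ)) ^ (k - j + 1) = ((-1) ^ k * (-1) ^ j) * (-1) := by
      rw [pow_succ, npow_sub k (by omega)]
    rw [s2, pow_zero]
    rcases Nat.even_or_odd i with hpi | hpi <;>
      rcases Nat.even_or_odd j with hpj | hpj <;>
        rcases Nat.even_or_odd k with hpk | hpk <;>
          simp only [hpi.neg_one_pow, hpj.neg_one_pow, hpk.neg_one_pow] <;> ring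

lemma fin_to_icc (f : ℕ → MvPolynomial (Fin k) ℤ) :
    ∑ l : Fin k, f (l.val + 1) = ∑ l ∈ Finset.Icc 1 k, f l := by
  rw [Fin.sum_univ_eq_sum_range (fun n => f (n + 1))]
  refine Finset.sum_nbij' (fun n => n + 1) (fun l => l - 1) ?_ ?_ ?_ ?_ ?_
  · intro n hn; rw [Finset.mem_range] at hn
    show n + 1 ∈ Finset.Icc 1 k; rw [Finset.mem_Icc]; omega
  · intro l hl; rw [Finset.mem_Icc] at hl
    show l - 1 ∈ Finset.range k; rw [Finset.mem_range]; omega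
  · intro n _; show n + 1 - 1 = n; omega
  · intro l hl; rw [Finset.mem_Icc] at hl; show l - 1 + 1 = l; omega
  · intro n _; rfl

end EAcommAux

/-- Commutation identity `E·A = A'·E`. -/
theorem EMat_mul_AMat_eq_AMat'_mul_EMat (k : ℕ) (hk : 1 ≤ k) :
    EMat k * AMat k = AMat' k * EMat k := by
  refine Matrix.ext fun i j => ?_
  rw [Matrix.mul_apply, Matrix.mul_apply]
  simp only [EMat, AMat, AMat', Matrix.of_apply]
  rw [EAcommAux.fin_to_icc k (fun m => Efun k (i.val + 1) m * Afun k m (j.val + 1)),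
    EAcommAux.fin_to_icc k (fun m => Afun k (k + 1 - m) (k + 1 - (i.val + 1)) * Efun k m (j.val + 1))]
  exact EAcommAux.core k (i.val + 1) (j.val + 1) (by omega) (by omega) (by omega) (by omega)

end
end

section
/- Elimination of the quotient variables in the Coulomb branch presentation: let J be the ideal of ℤ[z_1,…,z_k, ẑ_1,…,ẑ_{n−k}, ζ_1,…,ζ_n] generated by the polynomials V_s := Σ_{i+j=s} e_i(z) e_j(ẑ) − c'_{≥s}(z,ζ) for 1 ≤ s ≤ n−k. Then for every 1 ≤ ℓ ≤ n−k, the element e_ℓ(ẑ) − (-1)^ℓ G'_ℓ(z,ζ) belongs to J; equivalently, e_ℓ(ẑ) ≡ Σ_{i+j=ℓ} (-1)^j e_i(ζ) G_j(z) modulo J. -/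
open Finset MvPolynomial

noncomputable section

/-- The complete homogeneous symmetric polynomial `h_r` of a family. -/
def hsymmF {R : Type*} [CommRing R] {m : ℕ} (f : Fin m → R) (r : ℕ) : R :=
  ∑ μ : Sym (Fin m) r, (μ.1.map f).prod

/-- The ambient polynomial ring `ℤ[z_1,…,z_k, ẑ_1,…,ẑ_{n−k}, ζ_1,…,ζ_n]`. -/
abbrev ZHatZeta (k n : ℕ) := MvPolynomial (Fin k ⊕ Fin (n - k) ⊕ Fin n) ℤ

/-- `e_r(z)`: elementary symmetric polynomial in `z_1,…,z_k`. -/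
def eZ (k n : ℕ) (r : ℕ) : ZHatZeta k n :=
  esymmF (fun i : Fin k => X (Sum.inl i)) r

/-- `e_r(ẑ)`: elementary symmetric polynomial in `ẑ_1,…,ẑ_{n−k}`. -/
def eHat (k n : ℕ) (r : ℕ) : ZHatZeta k n :=
  esymmF (fun i : Fin (n - k) => X (Sum.inr (Sum.inl i))) r

/-- `e_r(ζ)`: elementary symmetric polynomial in `ζ_1,…,ζ_n`. -/
def eZeta (k n : ℕ) (r : ℕ) : ZHatZeta k n :=
  esymmF (fun j : Fin n => X (Sum.inr (Sum.inr j))) r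

/-- `h_r(z)`: complete homogeneous symmetric polynomial in `z_1,…,z_k`. -/
def hZ (k n : ℕ) (r : ℕ) : ZHatZeta k n :=
  hsymmF (fun i : Fin k => X (Sum.inl i)) r

/-- The single-row Grothendieck polynomial
`G_j(z) = Σ_{a,b ≥ 0, a+b ≤ k} (-1)^b h_{j+a}(z) e_b(z)`. -/
def GZ (k n : ℕ) (j : ℕ) : ZHatZeta k n :=
  ∑ a ∈ Finset.range (k + 1), ∑ b ∈ Finset.range (k + 1 - a),
    (-1) ^ b * hZ k n (j + a) * eZ k n b

/-- The equivariant Grothendieck polynomial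
`G'_j(z,ζ) = Σ_{a+b=j} (-1)^a e_a(ζ) G_b(z)`. -/
def GPrime (k n : ℕ) (j : ℕ) : ZHatZeta k n :=
  ∑ p ∈ Finset.HasAntidiagonal.antidiagonal j, (-1) ^ p.1 * eZeta k n p.1 * GZ k n p.2

/-- The truncation `c^z_{≥j} = Σ_{i=j}^{k} (-1)^{i-j} e_i(z)`. -/
def cGeZ (k n : ℕ) (j : ℕ) : ZHatZeta k n :=
  ∑ i ∈ Finset.Icc j k, (-1) ^ (i - j) * eZ k n i

/-- `c'_{≥ℓ}(z,ζ) = e_ℓ(ζ) + Σ_{m=1}^{k-1} e_{ℓ-m}(ζ) c^z_{≥ m+1}`,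
with the convention `e_s(ζ) = 0` for `s < 0` (i.e. for `m > ℓ`). -/
def cPrimeGe (k n : ℕ) (ℓ : ℕ) : ZHatZeta k n :=
  eZeta k n ℓ + ∑ m ∈ Finset.Icc 1 (k - 1),
    (if m ≤ ℓ then eZeta k n (ℓ - m) * cGeZ k n (m + 1) else 0)

/-- The generators `V_s = Σ_{i+j=s} e_i(z) e_j(ẑ) − c'_{≥s}(z,ζ)` of the ideal `J`. -/
def Vgen (k n : ℕ) (s : ℕ) : ZHatZeta k n :=
  (∑ p ∈ Finset.HasAntidiagonal.antidiagonal s, eZ k n p.1 * eHat k n p.2) - cPrimeGe k n s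

section Generic
variable {R : Type*} [CommRing R]

def esymmT {σ : Type*} [Fintype σ] (f : σ → R) (r : ℕ) : R :=
  ∑ t ∈ Finset.powersetCard r Finset.univ, ∏ j ∈ t, f j

def hsymmT {σ : Type*} [Fintype σ] [DecidableEq σ] (f : σ → R) (r : ℕ) : R :=
  ∑ μ : Sym σ r, (μ.1.map f).prod

lemma esymmT_zero {σ : Type*} [Fintype σ] (f : σ → R) : esymmT f 0 = 1 := by
  simp [esymmT]

lemma hsymmT_zero {σ : Type*} [Fintype σ] [DecidableEq σ] (f : σ → R) : hsymmT f 0 = 1 := by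
  rw [hsymmT]
  rw [Fintype.sum_unique]
  simp [Sym.eq_nil_of_card_zero]

lemma esymmT_eq_zero {σ : Type*} [Fintype σ] (f : σ → R) {r : ℕ}
    (h : Fintype.card σ < r) : esymmT f r = 0 := by
  rw [esymmT, Finset.powersetCard_eq_empty.2 (by simpa using h), Finset.sum_empty]

lemma esymmT_reindex {σ τ : Type*} [Fintype σ] [Fintype τ] (e : τ ≃ σ) (f : σ → R) (r : ℕ) :
    esymmT (f ∘ e) r = esymmT f r := by
  rw [esymmT, esymmT, ← Finset.esymm_map_val, ← Finset.esymm_map_val]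
  congr 1
  have h1 : (Finset.univ.val.map ⇑e).map f = Finset.univ.val.map (f ∘ ⇑e) := by
    rw [Multiset.map_map]
  rw [← h1]
  congr 1
  calc Finset.univ.val.map ⇑e = (Finset.univ.map e.toEmbedding).val := rfl
    _ = Finset.univ.val := by rw [Finset.map_univ_equiv]

lemma hsymmT_reindex {σ τ : Type*} [Fintype σ] [Fintype τ] [DecidableEq σ] [DecidableEq τ]
    (e : τ ≃ σ) (f : σ → R) (r : ℕ) :
    hsymmT (f ∘ e) r = hsymmT f r := by
  rw [hsymmT, hsymmT]
  refine Fintype.sum_equiv (Sym.equivCongr e) _ _ (fun μ => ?_)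
  simp [Sym.equivCongr_apply, Sym.map, Multiset.map_map]


lemma multiset_esymm_cons (a : R) (s : Multiset R) (r : ℕ) :
    (a ::ₘ s).esymm (r + 1) = s.esymm (r + 1) + a * s.esymm r := by
  rw [Multiset.esymm, Multiset.powersetCard_cons, Multiset.map_add, Multiset.sum_add,
    Multiset.map_map, Multiset.esymm, Multiset.esymm]
  congr 1
  rw [Multiset.map_congr rfl (fun t _ => by
    show (Multiset.prod ∘ Multiset.cons a) t = a * t.prod
    simp [Multiset.prod_cons])]
  rw [← Multiset.sum_map_mul_left]

lemma univ_val_option {σ : Type*} [Fintype σ] (g : Option σ → R) :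
    (Finset.univ : Finset (Option σ)).val.map g
      = g none ::ₘ (Finset.univ : Finset σ).val.map (g ∘ some) := by
  rw [univ_option]
  show ((Finset.cons none ((Finset.univ : Finset σ).map Function.Embedding.some) (by simp)).val).map g = _
  rw [Finset.cons_val, Multiset.map_cons]
  congr 1
  show ((Finset.univ : Finset σ).val.map (⇑Function.Embedding.some)).map g = _
  rw [Multiset.map_map]
  rfl

lemma esymmT_option {σ : Type*} [Fintype σ] [DecidableEq σ] (g : Option σ → R) (r : ℕ) :
    esymmT g (r + 1) = esymmT (g ∘ some) (r + 1) + g none * esymmT (g ∘ some) r := by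
  rw [esymmT, esymmT, esymmT, ← Finset.esymm_map_val, ← Finset.esymm_map_val,
    ← Finset.esymm_map_val, univ_val_option, multiset_esymm_cons]

lemma hsymmT_option {σ : Type*} [Fintype σ] [DecidableEq σ] (g : Option σ → R) (r : ℕ) :
    hsymmT g (r + 1) = g none * hsymmT g r + hsymmT (g ∘ some) (r + 1) := by
  rw [hsymmT, hsymmT, hsymmT]
  refine Eq.trans (Fintype.sum_equiv (symOptionSuccEquiv (α := σ)) _
    (fun x => ((SymOptionSuccEquiv.decode x : Multiset (Option σ)).map g).prod)
    (fun μ => by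
      show _ = (Multiset.map g ↑(SymOptionSuccEquiv.decode (SymOptionSuccEquiv.encode μ))).prod
      rw [SymOptionSuccEquiv.decode_encode]
      rfl)) ?_
  rw [Fintype.sum_sum_type]
  congr 1
  · rw [Finset.mul_sum]
    refine Fintype.sum_congr _ _ (fun μ => ?_)
    show (Multiset.map g ↑(SymOptionSuccEquiv.decode (Sum.inl μ))).prod = _
    rw [SymOptionSuccEquiv.decode_inl, Sym.coe_cons, Multiset.map_cons, Multiset.prod_cons]
    rfl
  · refine Fintype.sum_congr _ _ (fun μ => ?_)
    show (Multiset.map g ↑(SymOptionSuccEquiv.decode (Sum.inr μ))).prod = _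
    rw [SymOptionSuccEquiv.decode_inr, Sym.coe_map, Multiset.map_map]
    rfl


lemma hsymmT_isEmpty {σ : Type*} [Fintype σ] [DecidableEq σ] [IsEmpty σ] (f : σ → R) (r : ℕ) :
    hsymmT f (r + 1) = 0 := by
  haveI : IsEmpty (Sym σ (r + 1)) := ⟨fun μ => by
    have hc : μ.1 ≠ 0 := by
      intro h
      have h2 := μ.2
      rw [h] at h2
      simp at h2
    obtain ⟨a, _⟩ := Multiset.exists_mem_of_ne_zero hc
    exact IsEmpty.elim ‹_› a⟩
  rw [hsymmT, Finset.univ_eq_empty, Finset.sum_empty]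

/-- The alternating convolution of `h` and `e`. -/
def PsumT {σ : Type*} [Fintype σ] [DecidableEq σ] (f : σ → R) (s : ℕ) : R :=
  ∑ p ∈ Finset.HasAntidiagonal.antidiagonal s, (-1) ^ p.2 * hsymmT f p.1 * esymmT f p.2

lemma PsumT_zero {σ : Type*} [Fintype σ] [DecidableEq σ] (f : σ → R) : PsumT f 0 = 1 := by
  rw [PsumT, Finset.Nat.antidiagonal_zero, Finset.sum_singleton, hsymmT_zero, esymmT_zero]
  ring

lemma PsumT_reindex {σ τ : Type*} [Fintype σ] [Fintype τ] [DecidableEq σ] [DecidableEq τ]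
    (e : τ ≃ σ) (f : σ → R) (s : ℕ) : PsumT (f ∘ e) s = PsumT f s := by
  rw [PsumT, PsumT]
  exact Finset.sum_congr rfl fun p _ => by rw [esymmT_reindex e, hsymmT_reindex e]

lemma PsumT_succ (m : ℕ) : ∀ (f : Fin m → R) (s : ℕ), PsumT f (s + 1) = 0 := by
  induction m with
  | zero =>
    intro f s
    rw [PsumT]
    refine Finset.sum_eq_zero fun p hp => ?_
    rw [Finset.HasAntidiagonal.mem_antidiagonal] at hp
    rcases Nat.eq_zero_or_pos p.2 with h2 | h2
    · have h1 : p.1 = s + 1 := by omega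
      rw [h1, hsymmT_isEmpty]
      ring
    · obtain ⟨r, hr⟩ := Nat.exists_eq_add_of_lt h2
      have : esymmT f p.2 = 0 := esymmT_eq_zero f (by simp; omega)
      rw [this]; ring
  | succ m ih =>
    intro f s
    set e : Fin (m + 1) ≃ Option (Fin m) := finSuccEquiv m with he
    set g : Option (Fin m) → R := f ∘ e.symm with hg
    have hfe : f = g ∘ e := by funext i; simp [hg]
    rw [hfe, PsumT_reindex e g]
    set f' : Fin m → R := g ∘ some with hf'
    set x : R := g none with hx
    set Q : ℕ → R := fun t =>
      ∑ p ∈ Finset.HasAntidiagonal.antidiagonal t, (-1) ^ p.2 * hsymmT g p.1 * esymmT f' p.2 with hQ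
    have claim1 : ∀ t, PsumT g (t + 1) = Q (t + 1) - x * Q t := by
      intro t
      rw [PsumT, Finset.Nat.sum_antidiagonal_succ']
      rw [hQ]
      simp only []
      rw [Finset.Nat.sum_antidiagonal_succ'
        (f := fun p => (-1 : R) ^ p.2 * hsymmT g p.1 * esymmT f' p.2)]
      have step : ∀ p : ℕ × ℕ, (-1 : R) ^ (p.2 + 1) * hsymmT g p.1 * esymmT g (p.2 + 1)
          = (-1) ^ (p.2 + 1) * hsymmT g p.1 * esymmT f' (p.2 + 1)
            + -((-1) ^ p.2 * hsymmT g p.1 * esymmT f' p.2 * x) := by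
        intro p
        rw [esymmT_option g p.2]
        show _ = _ + -((-1 : R) ^ p.2 * hsymmT g p.1 * esymmT (g ∘ some) p.2 * x)
        ring
      rw [Finset.sum_congr rfl fun p _ => step p, Finset.sum_add_distrib]
      rw [Finset.sum_neg_distrib, ← Finset.sum_mul]
      rw [esymmT_zero g, show esymmT f' 0 = 1 from esymmT_zero _]
      ring
    have claim2 : ∀ t, Q (t + 1) = PsumT f' (t + 1) + x * Q t := by
      intro t
      rw [hQ]
      simp only []
      rw [Finset.Nat.sum_antidiagonal_succ]
      rw [PsumT, Finset.Nat.sum_antidiagonal_succ]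
      have step : ∀ p : ℕ × ℕ, (-1 : R) ^ p.2 * hsymmT g (p.1 + 1) * esymmT f' p.2
          = (-1) ^ p.2 * hsymmT f' (p.1 + 1) * esymmT f' p.2
            + (-1) ^ p.2 * hsymmT g p.1 * esymmT f' p.2 * x := by
        intro p
        rw [hsymmT_option g p.1]
        show _ = (-1 : R) ^ p.2 * hsymmT (g ∘ some) (p.1 + 1) * esymmT f' p.2 + _
        ring
      rw [Finset.sum_congr rfl fun p _ => step p, Finset.sum_add_distrib, ← Finset.sum_mul]
      rw [hsymmT_zero g, show hsymmT f' 0 = 1 from hsymmT_zero _]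
      ring
    rw [claim1, claim2, ih f' s]
    ring


lemma helperA (N : ℕ) (f : ℕ → ℕ → R) :
    ∑ n ∈ Finset.range (N + 1), ∑ c ∈ Finset.range (n + 1), f n c
      = ∑ c ∈ Finset.range (N + 1), ∑ d ∈ Finset.range (N + 1 - c), f (c + d) c := by
  induction N with
  | zero => simp
  | succ N ih =>
    rw [Finset.sum_range_succ, ih]
    conv_rhs => rw [Finset.sum_range_succ]
    have h1 : ∀ c ∈ Finset.range (N + 1), ∑ d ∈ Finset.range (N + 1 + 1 - c), f (c + d) c
        = (∑ d ∈ Finset.range (N + 1 - c), f (c + d) c) + f (N + 1) c := by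
      intro c hc
      rw [Finset.mem_range] at hc
      rw [show N + 1 + 1 - c = (N + 1 - c) + 1 by omega, Finset.sum_range_succ]
      congr 2
      omega
    rw [Finset.sum_congr rfl h1, Finset.sum_add_distrib]
    rw [show N + 1 + 1 - (N + 1) = 1 by omega, Finset.sum_range_one]
    rw [Finset.sum_range_succ (fun c => f (N + 1) c) (N + 1)]
    simp [add_assoc]

lemma helperB (N : ℕ) (G : ℕ → ℕ → R) :
    ∑ a ∈ Finset.range (N + 1), ∑ c ∈ Finset.range a, G a c
      = ∑ c ∈ Finset.range N, ∑ d ∈ Finset.range (N - c), G (c + 1 + d) c := by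
  induction N with
  | zero => simp
  | succ N ih =>
    rw [Finset.sum_range_succ, ih]
    conv_rhs => rw [Finset.sum_range_succ]
    have h1 : ∀ c ∈ Finset.range N, ∑ d ∈ Finset.range (N + 1 - c), G (c + 1 + d) c
        = (∑ d ∈ Finset.range (N - c), G (c + 1 + d) c) + G (N + 1) c := by
      intro c hc
      rw [Finset.mem_range] at hc
      rw [show N + 1 - c = (N - c) + 1 by omega, Finset.sum_range_succ]
      congr 2
      omega
    rw [Finset.sum_congr rfl h1, Finset.sum_add_distrib]
    rw [show N + 1 - N = 1 by omega, Finset.sum_range_one]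
    rw [Finset.sum_range_succ (fun c => G (N + 1) c) N]
    simp [add_assoc]

lemma tri_swap (N : ℕ) (H : ℕ → ℕ → R) :
    ∑ i ∈ Finset.range (N + 1), ∑ a ∈ Finset.range (N + 1 - i), H i a
      = ∑ a ∈ Finset.range (N + 1), ∑ i ∈ Finset.range (N + 1 - a), H i a := by
  induction N with
  | zero => simp
  | succ N ih =>
    have split : ∀ K : ℕ → ℕ → R,
        ∑ i ∈ Finset.range (N + 2), ∑ a ∈ Finset.range (N + 2 - i), K i a
        = (∑ i ∈ Finset.range (N + 1), ∑ a ∈ Finset.range (N + 1 - i), K i a)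
          + ∑ i ∈ Finset.range (N + 2), K i (N + 1 - i) := by
      intro K
      rw [Finset.sum_range_succ]
      have h1 : ∀ i ∈ Finset.range (N + 1), ∑ a ∈ Finset.range (N + 2 - i), K i a
          = (∑ a ∈ Finset.range (N + 1 - i), K i a) + K i (N + 1 - i) := by
        intro i hi
        rw [Finset.mem_range] at hi
        rw [show N + 2 - i = (N + 1 - i) + 1 by omega, Finset.sum_range_succ]
      rw [Finset.sum_congr rfl h1, Finset.sum_add_distrib]
      rw [show N + 2 - (N + 1) = 1 by omega, Finset.sum_range_one]
      rw [Finset.sum_range_succ (fun i => K i (N + 1 - i)) (N + 1)]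
      simp [add_assoc]
    rw [show N + 1 + 1 = N + 2 from rfl, split, split, ih]
    congr 1
    rw [← Finset.sum_range_reflect (fun i => H i (N + 1 - i)) (N + 2)]
    refine Finset.sum_congr rfl fun a ha => ?_
    rw [Finset.mem_range] at ha
    congr 1
    omega

lemma triple_swap (n : ℕ) (F : ℕ → ℕ → ℕ → R) :
    ∑ p ∈ Finset.HasAntidiagonal.antidiagonal n, ∑ q ∈ Finset.HasAntidiagonal.antidiagonal p.2, F p.1 q.1 q.2
      = ∑ p ∈ Finset.HasAntidiagonal.antidiagonal n, ∑ q ∈ Finset.HasAntidiagonal.antidiagonal p.2, F q.1 p.1 q.2 := by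
  rw [Finset.Nat.sum_antidiagonal_eq_sum_range_succ
    (fun i j => ∑ q ∈ Finset.HasAntidiagonal.antidiagonal j, F i q.1 q.2) n]
  rw [Finset.Nat.sum_antidiagonal_eq_sum_range_succ
    (fun i j => ∑ q ∈ Finset.HasAntidiagonal.antidiagonal j, F q.1 i q.2) n]
  have conv1 : ∀ i ∈ Finset.range (n + 1), ∑ q ∈ Finset.HasAntidiagonal.antidiagonal (n - i), F i q.1 q.2
      = ∑ a ∈ Finset.range (n + 1 - i), F i a (n - i - a) := by
    intro i hi
    rw [Finset.mem_range] at hi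
    rw [Finset.Nat.sum_antidiagonal_eq_sum_range_succ (fun a b => F i a b) (n - i)]
    have hs : (n - i).succ = n + 1 - i := by omega
    rw [hs]
  have conv2 : ∀ a ∈ Finset.range (n + 1), ∑ q ∈ Finset.HasAntidiagonal.antidiagonal (n - a), F q.1 a q.2
      = ∑ i ∈ Finset.range (n + 1 - a), F i a (n - i - a) := by
    intro a ha
    rw [Finset.mem_range] at ha
    rw [Finset.Nat.sum_antidiagonal_eq_sum_range_succ (fun i b => F i a b) (n - a)]
    have hs : (n - a).succ = n + 1 - a := by omega
    rw [hs]
    exact Finset.sum_congr rfl fun i hi => by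
      rw [Finset.mem_range] at hi
      congr 1
      omega
  rw [Finset.sum_congr rfl conv1, Finset.sum_congr rfl conv2]
  exact tri_swap n (fun i a => F i a (n - i - a))



end Generic

section Spec

variable (k n : ℕ)

/-- the `z` variables -/
def zvar : Fin k → ZHatZeta k n := fun i => X (Sum.inl i)

lemma eZ_eq (r : ℕ) : eZ k n r = esymmT (zvar k n) r := rfl

lemma hZ_eq (r : ℕ) : hZ k n r = hsymmT (zvar k n) r := rfl

lemma eZ_zero : eZ k n 0 = 1 := esymmT_zero _

lemma eHat_zero : eHat k n 0 = 1 := esymmT_zero _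

lemma eZeta_zero : eZeta k n 0 = 1 := esymmT_zero _

lemma hZ_zero : hZ k n 0 = 1 := hsymmT_zero _

lemma eZ_eq_zero {r : ℕ} (h : k < r) : eZ k n r = 0 := by
  rw [eZ_eq]
  exact esymmT_eq_zero _ (by simpa using h)

lemma Pz_succ (s : ℕ) : PsumT (zvar k n) (s + 1) = 0 := PsumT_succ k (zvar k n) s

/-- partial alternating sums of `e` -/
def Tk (a : ℕ) : ZHatZeta k n := ∑ b ∈ Finset.range (k + 1 - a), (-1) ^ b * eZ k n b

lemma GZ_eq (j : ℕ) : GZ k n j = ∑ a ∈ Finset.range (k + 1), hZ k n (j + a) * Tk k n a := by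
  rw [GZ]
  refine Finset.sum_congr rfl fun a _ => ?_
  rw [Tk, Finset.mul_sum]
  exact Finset.sum_congr rfl fun b _ => by ring

lemma regroup (N : ℕ) :
    ∑ c ∈ Finset.range (N + 1), ∑ d ∈ Finset.range (N + 1 - c),
      (-1) ^ d * hZ k n c * eZ k n d = 1 := by
  have h1 : ∑ c ∈ Finset.range (N + 1), ∑ d ∈ Finset.range (N + 1 - c),
        (-1 : ZHatZeta k n) ^ d * hZ k n c * eZ k n d
      = ∑ c ∈ Finset.range (N + 1), ∑ d ∈ Finset.range (N + 1 - c),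
        (fun m c' => (-1 : ZHatZeta k n) ^ (m - c') * hZ k n c' * eZ k n (m - c')) (c + d) c := by
    refine Finset.sum_congr rfl fun c _ => Finset.sum_congr rfl fun d _ => ?_
    simp only [Nat.add_sub_cancel_left]
  rw [h1, ← helperA N (fun m c' => (-1 : ZHatZeta k n) ^ (m - c') * hZ k n c' * eZ k n (m - c'))]
  have h2 : ∀ m ∈ Finset.range (N + 1), ∑ c ∈ Finset.range (m + 1),
        (-1 : ZHatZeta k n) ^ (m - c) * hZ k n c * eZ k n (m - c) = PsumT (zvar k n) m := by
    intro m _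
    rw [PsumT, Finset.Nat.sum_antidiagonal_eq_sum_range_succ
      (fun a b => (-1 : ZHatZeta k n) ^ b * hsymmT (zvar k n) a * esymmT (zvar k n) b) m]
    rfl
  rw [Finset.sum_congr rfl h2]
  rw [Finset.sum_range_succ' (fun m => PsumT (zvar k n) m) N]
  simp [Pz_succ, PsumT_zero]

lemma GZ_zero : GZ k n 0 = 1 := by
  rw [GZ]
  refine Eq.trans ?_ (regroup k n k)
  exact Finset.sum_congr rfl fun a _ => Finset.sum_congr rfl fun b _ => by rw [Nat.zero_add]

lemma U_lemma (j : ℕ) (hj1 : 1 ≤ j) (hj2 : j ≤ k) :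
    ∑ c ∈ Finset.range (k + 1 - j), hZ k n c * Tk k n (c + j) = 1 := by
  have h1 : ∀ c ∈ Finset.range (k + 1 - j), hZ k n c * Tk k n (c + j)
      = ∑ b ∈ Finset.range ((k - j) + 1 - c), (-1) ^ b * hZ k n c * eZ k n b := by
    intro c hc
    rw [Finset.mem_range] at hc
    rw [Tk, Finset.mul_sum, show k + 1 - (c + j) = (k - j) + 1 - c by omega]
    exact Finset.sum_congr rfl fun b _ => by ring
  rw [Finset.sum_congr rfl h1, show k + 1 - j = (k - j) + 1 by omega]
  exact regroup k n (k - j)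

lemma sign_lemma (a b : ℕ) : (-1 : ZHatZeta k n) ^ (a + b) * (-1) ^ a = (-1) ^ b := by
  rw [← pow_add, show a + b + a = 2 * a + b by omega, pow_add, pow_mul]
  norm_num

lemma A_lemma : ∀ a m : ℕ, 1 ≤ m →
    (∑ p ∈ Finset.HasAntidiagonal.antidiagonal m, (-1) ^ p.2 * eZ k n p.1 * hZ k n (p.2 + a))
      = ∑ c ∈ Finset.range a, (-1) ^ c * eZ k n (m + 1 + c) * hZ k n (a - 1 - c) := by
  intro a
  induction a with
  | zero =>
    intro m hm
    rw [Finset.range_zero, Finset.sum_empty]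
    have h1 : ∀ p ∈ Finset.HasAntidiagonal.antidiagonal m, (-1 : ZHatZeta k n) ^ p.2 * eZ k n p.1 * hZ k n (p.2 + 0)
        = (-1) ^ m * ((-1) ^ p.1 * hZ k n p.2 * eZ k n p.1) := by
      intro p hp
      rw [Finset.HasAntidiagonal.mem_antidiagonal] at hp
      have hs : (-1 : ZHatZeta k n) ^ p.2 = (-1) ^ m * (-1) ^ p.1 := by
        rw [← sign_lemma k n p.1 p.2, hp]
      rw [Nat.add_zero, hs]
      ring
    rw [Finset.sum_congr rfl h1, ← Finset.mul_sum]
    have h2 : ∑ p ∈ Finset.HasAntidiagonal.antidiagonal m,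
        (-1 : ZHatZeta k n) ^ p.1 * hZ k n p.2 * eZ k n p.1 = PsumT (zvar k n) m := by
      rw [PsumT, ← Finset.Nat.sum_antidiagonal_swap
        (f := fun p => (-1 : ZHatZeta k n) ^ p.2 * hsymmT (zvar k n) p.1 * esymmT (zvar k n) p.2)]
      rfl
    obtain ⟨t, rfl⟩ : ∃ t, m = t + 1 := ⟨m - 1, by omega⟩
    rw [h2, Pz_succ]
    ring
  | succ a ih =>
    intro m hm
    have key : ∑ p ∈ Finset.HasAntidiagonal.antidiagonal (m + 1),
          (-1 : ZHatZeta k n) ^ p.2 * eZ k n p.1 * hZ k n (p.2 + a)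
        = eZ k n (m + 1) * hZ k n a
          - ∑ p ∈ Finset.HasAntidiagonal.antidiagonal m, (-1) ^ p.2 * eZ k n p.1 * hZ k n (p.2 + (a + 1)) := by
      rw [Finset.Nat.sum_antidiagonal_succ'
        (f := fun p => (-1 : ZHatZeta k n) ^ p.2 * eZ k n p.1 * hZ k n (p.2 + a))]
      have h1 : ∀ p ∈ Finset.HasAntidiagonal.antidiagonal m,
          (-1 : ZHatZeta k n) ^ (p.2 + 1) * eZ k n p.1 * hZ k n (p.2 + 1 + a)
          = -((-1) ^ p.2 * eZ k n p.1 * hZ k n (p.2 + (a + 1))) := by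
        intro p _
        rw [show p.2 + 1 + a = p.2 + (a + 1) by omega]
        ring
      rw [Finset.sum_congr rfl h1, Finset.sum_neg_distrib]
      rw [Nat.zero_add, pow_zero, one_mul]
      ring
    have step : ∑ p ∈ Finset.HasAntidiagonal.antidiagonal m,
          (-1 : ZHatZeta k n) ^ p.2 * eZ k n p.1 * hZ k n (p.2 + (a + 1))
        = eZ k n (m + 1) * hZ k n a
          - ∑ p ∈ Finset.HasAntidiagonal.antidiagonal (m + 1), (-1) ^ p.2 * eZ k n p.1 * hZ k n (p.2 + a) := by
      rw [key]; ring
    rw [step, ih (m + 1) (by omega)]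
    rw [Finset.sum_range_succ' (fun c => (-1 : ZHatZeta k n) ^ c * eZ k n (m + 1 + c)
      * hZ k n (a + 1 - 1 - c)) a]
    have h2 : ∀ c ∈ Finset.range a,
        (-1 : ZHatZeta k n) ^ (c + 1) * eZ k n (m + 1 + (c + 1)) * hZ k n (a + 1 - 1 - (c + 1))
        = -((-1) ^ c * eZ k n (m + 1 + 1 + c) * hZ k n (a - 1 - c)) := by
      intro c _
      rw [show m + 1 + (c + 1) = m + 1 + 1 + c by omega, show a + 1 - 1 - (c + 1) = a - 1 - c by omega]
      ring
    rw [Finset.sum_congr rfl h2, Finset.sum_neg_distrib]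
    rw [pow_zero, one_mul, Nat.add_zero, show a + 1 - 1 - 0 = a by omega]
    ring

/-- the convolution `F_m` -/
def Fm (m : ℕ) : ZHatZeta k n :=
  ∑ p ∈ Finset.HasAntidiagonal.antidiagonal m, (-1) ^ p.2 * eZ k n p.1 * GZ k n p.2

lemma Fm_zero : Fm k n 0 = 1 := by
  rw [Fm, Finset.Nat.antidiagonal_zero, Finset.sum_singleton, GZ_zero, eZ_zero]
  ring

lemma Fm_eq (m : ℕ) (hm : 1 ≤ m) :
    Fm k n m = ∑ c ∈ Finset.range k, (-1) ^ c * eZ k n (m + 1 + c) := by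
  rw [Fm]
  have h1 : ∀ p ∈ Finset.HasAntidiagonal.antidiagonal m, (-1 : ZHatZeta k n) ^ p.2 * eZ k n p.1 * GZ k n p.2
      = ∑ a ∈ Finset.range (k + 1), ((-1) ^ p.2 * eZ k n p.1 * hZ k n (p.2 + a)) * Tk k n a := by
    intro p _
    rw [GZ_eq, Finset.mul_sum]
    exact Finset.sum_congr rfl fun a _ => by ring
  rw [Finset.sum_congr rfl h1, Finset.sum_comm]
  have h2 : ∀ a ∈ Finset.range (k + 1),
      ∑ p ∈ Finset.HasAntidiagonal.antidiagonal m, ((-1 : ZHatZeta k n) ^ p.2 * eZ k n p.1 * hZ k n (p.2 + a)) * Tk k n a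
      = ∑ c ∈ Finset.range a, ((-1) ^ c * eZ k n (m + 1 + c) * hZ k n (a - 1 - c)) * Tk k n a := by
    intro a _
    rw [← Finset.sum_mul, A_lemma k n a m hm, Finset.sum_mul]
  rw [Finset.sum_congr rfl h2]
  rw [helperB k (fun a c => ((-1 : ZHatZeta k n) ^ c * eZ k n (m + 1 + c) * hZ k n (a - 1 - c)) * Tk k n a)]
  refine Finset.sum_congr rfl fun c hc => ?_
  rw [Finset.mem_range] at hc
  have h3 : ∀ d ∈ Finset.range (k - c),
      ((-1 : ZHatZeta k n) ^ c * eZ k n (m + 1 + c) * hZ k n (c + 1 + d - 1 - c)) * Tk k n (c + 1 + d)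
      = ((-1) ^ c * eZ k n (m + 1 + c)) * (hZ k n d * Tk k n (d + (c + 1))) := by
    intro d _
    rw [show c + 1 + d - 1 - c = d by omega, show c + 1 + d = d + (c + 1) by omega]
    ring
  rw [Finset.sum_congr rfl h3, ← Finset.mul_sum]
  rw [show k - c = k + 1 - (c + 1) by omega, U_lemma k n (c + 1) (by omega) (by omega)]
  ring

lemma cGeZ_eq_zero {j : ℕ} (h : k < j) : cGeZ k n j = 0 := by
  rw [cGeZ, Finset.Icc_eq_empty (by omega), Finset.sum_empty]

lemma Fm_eq_cGeZ (m : ℕ) (hm : 1 ≤ m) : Fm k n m = cGeZ k n (m + 1) := by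
  rw [Fm_eq k n m hm]
  have h1 : ∑ c ∈ Finset.range k, (-1 : ZHatZeta k n) ^ c * eZ k n (m + 1 + c)
      = ∑ c ∈ Finset.range (k - m), (-1) ^ c * eZ k n (m + 1 + c) := by
    symm
    refine Finset.sum_subset (by
      intro x hx
      rw [Finset.mem_range] at *
      omega) ?_
    intro c hc hcn
    rw [Finset.mem_range] at hc hcn
    rw [eZ_eq_zero k n (show k < m + 1 + c by omega)]
    ring
  rw [h1, cGeZ, ← Finset.Ico_add_one_right_eq_Icc, Finset.sum_Ico_eq_sum_range]
  rw [show k + 1 - (m + 1) = k - m by omega]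
  refine Finset.sum_congr rfl fun c _ => ?_
  rw [show m + 1 + c - (m + 1) = c by omega, show m + 1 + c = c + (m + 1) by omega]

lemma F5 (ℓ : ℕ) (hl : 1 ≤ ℓ) :
    ∑ p ∈ Finset.HasAntidiagonal.antidiagonal ℓ, eZ k n p.1 * ((-1) ^ p.2 * GPrime k n p.2)
      = cPrimeGe k n ℓ := by
  obtain ⟨t, rfl⟩ : ∃ t, ℓ = t + 1 := ⟨ℓ - 1, by omega⟩
  -- Step A : triple swap
  have stepA : ∑ p ∈ Finset.HasAntidiagonal.antidiagonal (t + 1), eZ k n p.1 * ((-1) ^ p.2 * GPrime k n p.2)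
      = ∑ p ∈ Finset.HasAntidiagonal.antidiagonal (t + 1), eZeta k n p.1 * Fm k n p.2 := by
    have h1 : ∀ p ∈ Finset.HasAntidiagonal.antidiagonal (t + 1),
        eZ k n p.1 * ((-1 : ZHatZeta k n) ^ p.2 * GPrime k n p.2)
        = ∑ q ∈ Finset.HasAntidiagonal.antidiagonal p.2,
            eZeta k n q.1 * ((-1) ^ q.2 * eZ k n p.1 * GZ k n q.2) := by
      intro p _
      rw [GPrime, Finset.mul_sum, Finset.mul_sum]
      refine Finset.sum_congr rfl fun q hq => ?_
      rw [Finset.HasAntidiagonal.mem_antidiagonal] at hq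
      have hs : (-1 : ZHatZeta k n) ^ p.2 * (-1) ^ q.1 = (-1) ^ q.2 := by
        rw [← hq, sign_lemma]
      calc eZ k n p.1 * ((-1 : ZHatZeta k n) ^ p.2 * ((-1) ^ q.1 * eZeta k n q.1 * GZ k n q.2))
          = ((-1 : ZHatZeta k n) ^ p.2 * (-1) ^ q.1) * (eZ k n p.1 * eZeta k n q.1 * GZ k n q.2) := by
            ring
        _ = eZeta k n q.1 * ((-1) ^ q.2 * eZ k n p.1 * GZ k n q.2) := by rw [hs]; ring
    rw [Finset.sum_congr rfl h1]
    rw [triple_swap (t + 1) (fun i a b => eZeta k n a * ((-1) ^ b * eZ k n i * GZ k n b))]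
    refine Finset.sum_congr rfl fun p _ => ?_
    rw [Fm, Finset.mul_sum]
  rw [stepA]
  rw [Finset.Nat.sum_antidiagonal_succ' (f := fun p => eZeta k n p.1 * Fm k n p.2)]
  rw [Fm_zero, mul_one]
  have stepC : ∑ p ∈ Finset.HasAntidiagonal.antidiagonal t, eZeta k n p.1 * Fm k n (p.2 + 1)
      = ∑ j ∈ Finset.range (t + 1), eZeta k n (t - j) * cGeZ k n (j + 2) := by
    have h1 : ∀ p ∈ Finset.HasAntidiagonal.antidiagonal t, eZeta k n p.1 * Fm k n (p.2 + 1)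
        = eZeta k n p.1 * cGeZ k n (p.2 + 2) := by
      intro p _
      rw [Fm_eq_cGeZ k n (p.2 + 1) (by omega)]
    rw [Finset.sum_congr rfl h1]
    rw [Finset.Nat.sum_antidiagonal_eq_sum_range_succ
      (fun a b => eZeta k n a * cGeZ k n (b + 2)) t]
    rw [← Finset.sum_range_reflect (fun j => eZeta k n (t - j) * cGeZ k n (j + 2)) (t + 1)]
    refine Finset.sum_congr rfl fun j hj => ?_
    rw [Finset.mem_range] at hj
    rw [show t + 1 - 1 - j = t - j by omega, show t - (t - j) = j by omega]
  rw [stepC, cPrimeGe]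
  congr 1
  -- final: match the truncated sums
  set g : ℕ → ZHatZeta k n := fun m => eZeta k n (t + 1 - m) * cGeZ k n (m + 1) with hg
  have h2 : ∑ j ∈ Finset.range (t + 1), eZeta k n (t - j) * cGeZ k n (j + 2)
      = ∑ m ∈ Finset.Icc 1 (t + 1), g m := by
    rw [← Finset.Ico_add_one_right_eq_Icc, Finset.sum_Ico_eq_sum_range]
    rw [show t + 1 + 1 - 1 = t + 1 by omega]
    refine Finset.sum_congr rfl fun j _ => ?_
    rw [hg]
    simp only []
    rw [show t + 1 - (1 + j) = t - j by omega, show 1 + j + 1 = j + 2 by omega]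
  rw [h2]
  set M := max (t + 1) (k - 1) with hM
  have h3 : ∑ m ∈ Finset.Icc 1 (t + 1), g m
      = ∑ m ∈ Finset.Icc 1 M, (if m ≤ t + 1 then g m else 0) := by
    rw [← Finset.sum_filter]
    congr 1
    ext m
    simp only [Finset.mem_filter, Finset.mem_Icc]
    omega
  have h4 : ∑ m ∈ Finset.Icc 1 (k - 1), (if m ≤ t + 1 then g m else 0)
      = ∑ m ∈ Finset.Icc 1 M, (if m ≤ t + 1 then g m else 0) := by
    refine Finset.sum_subset (by
      intro x hx
      rw [Finset.mem_Icc] at *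
      omega) ?_
    intro m hm hmn
    rw [Finset.mem_Icc] at hm hmn
    by_cases hc : m ≤ t + 1
    · rw [if_pos hc, hg]
      simp only []
      rw [cGeZ_eq_zero k n (show k < m + 1 by omega)]
      ring
    · rw [if_neg hc]
  rw [h3, ← h4]

lemma GPrime_zero : GPrime k n 0 = 1 := by
  rw [GPrime, Finset.Nat.antidiagonal_zero, Finset.sum_singleton, GZ_zero, eZeta_zero]
  ring

end Spec

lemma main_aux (k n : ℕ) (hk : 1 ≤ k) (hkn : k < n) :
    ∀ ℓ : ℕ, 1 ≤ ℓ → ℓ ≤ n - k →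
      eHat k n ℓ - (-1) ^ ℓ * GPrime k n ℓ
        ∈ Ideal.span (Vgen k n '' Set.Icc 1 (n - k)) := by
  intro ℓ
  induction ℓ using Nat.strong_induction_on with
  | _ ℓ IH =>
    intro hl1 hl2
    obtain ⟨t, rfl⟩ : ∃ t, ℓ = t + 1 := ⟨ℓ - 1, by omega⟩
    have hV : Vgen k n (t + 1) ∈ Ideal.span (Vgen k n '' Set.Icc 1 (n - k)) :=
      Ideal.subset_span ⟨t + 1, ⟨hl1, hl2⟩, rfl⟩
    have key : eHat k n (t + 1) - (-1) ^ (t + 1) * GPrime k n (t + 1)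
        = Vgen k n (t + 1) - ∑ p ∈ Finset.HasAntidiagonal.antidiagonal t,
            eZ k n (p.1 + 1) * (eHat k n p.2 - (-1) ^ p.2 * GPrime k n p.2) := by
      rw [Vgen, ← F5 k n (t + 1) (by omega)]
      rw [Finset.Nat.sum_antidiagonal_succ (f := fun p => eZ k n p.1 * eHat k n p.2)]
      rw [Finset.Nat.sum_antidiagonal_succ
        (f := fun p => eZ k n p.1 * ((-1 : ZHatZeta k n) ^ p.2 * GPrime k n p.2))]
      have hsub : ∀ p ∈ Finset.HasAntidiagonal.antidiagonal t,
          eZ k n (p.1 + 1) * (eHat k n p.2 - (-1 : ZHatZeta k n) ^ p.2 * GPrime k n p.2)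
          = eZ k n (p.1 + 1) * eHat k n p.2
            - eZ k n (p.1 + 1) * ((-1) ^ p.2 * GPrime k n p.2) := by
        intro p _
        ring
      rw [Finset.sum_congr rfl hsub, Finset.sum_sub_distrib, eZ_zero]
      ring
    rw [key]
    refine Ideal.sub_mem _ hV (Ideal.sum_mem _ fun p hp => ?_)
    rw [Finset.HasAntidiagonal.mem_antidiagonal] at hp
    rcases Nat.eq_zero_or_pos p.2 with h0 | hpos
    · rw [h0, eHat_zero, GPrime_zero, pow_zero]
      norm_num
    · exact Ideal.mul_mem_left _ _ (IH p.2 (by omega) hpos (by omega))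

/-- Elimination of the quotient variables in the Coulomb branch presentation:
if `J` is the ideal generated by `V_s` for `1 ≤ s ≤ n−k`, then for `1 ≤ ℓ ≤ n−k`
one has `e_ℓ(ẑ) ≡ (-1)^ℓ G'_ℓ(z,ζ) mod J`. -/
theorem eHat_equiv_GPrime_mod_coulomb (k n : ℕ) (hk : 1 ≤ k) (hkn : k < n)
    (ℓ : ℕ) (hℓ1 : 1 ≤ ℓ) (hℓ : ℓ ≤ n - k) :
    eHat k n ℓ - (-1) ^ ℓ * GPrime k n ℓ
      ∈ Ideal.span (Vgen k n '' Set.Icc 1 (n - k)) := by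
  exact main_aux k n hk hkn ℓ hℓ1 hℓ

end
end
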